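/- arXiv:2010.13599 — 5 statements merged into one kernel-verified Lean document; each statement's English description precedes it below -/
import Mathlib

section
/- Unbiasedness of the Horvitz–Thompson estimator (Proposition 1): Under the Bernoulli design, the expectation of the Horvitz–Thompson estimator equals the average marginalized response: E[τ̂] = τ, i.e. E[(1/(Np)) Σ_{i=1}^N Z_i μ_i(Z) − (1/(N(1−p))) Σ_{i=1}^N (1−Z_i) μ_i(Z)] = (1/N) Σ_{i=1}^N (E[μ_i^{(1)}(Z)] − E[μ_i^{(0)}(Z)]). -/
/-- Expectation with respect to the Bernoulli(p) product measure on `{0,1}^N`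
(represented as `Fin N → Bool`): each assignment vector `z` gets weight
`∏ i, (p if z i = 1 else 1 - p)`. -/
noncomputable def bexp {N : ℕ} (p : ℝ) (f : (Fin N → Bool) → ℝ) : ℝ :=
  ∑ z : Fin N → Bool, (∏ i, if z i then p else 1 - p) * f z

section aux

variable {N : ℕ} (p : ℝ)

lemma bexp_split (i : Fin N) (g : (Fin N → Bool) → ℝ) :
    ∑ z : Fin N → Bool, g z
      = ∑ b : Bool, ∑ h : {j : Fin N // j ≠ i} → Bool,
          g ((Equiv.funSplitAt i Bool).symm (b, h)) := by
  rw [← Equiv.sum_comp (Equiv.funSplitAt i Bool).symm g, Fintype.sum_prod_type]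

lemma symm_apply_at (i : Fin N) (b : Bool) (h : {j : Fin N // j ≠ i} → Bool) :
    (Equiv.funSplitAt i Bool).symm (b, h) i = b := by
  simp [Equiv.funSplitAt, Equiv.piSplitAt]

lemma symm_apply_ne (i : Fin N) (b : Bool) (h : {j : Fin N // j ≠ i} → Bool)
    {j : Fin N} (hj : j ≠ i) :
    (Equiv.funSplitAt i Bool).symm (b, h) j = h ⟨j, hj⟩ := by
  simp [Equiv.funSplitAt, Equiv.piSplitAt, hj]

lemma update_symm (i : Fin N) (b b' : Bool) (h : {j : Fin N // j ≠ i} → Bool) :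
    Function.update ((Equiv.funSplitAt i Bool).symm (b, h)) i b'
      = (Equiv.funSplitAt i Bool).symm (b', h) := by
  funext j
  rcases eq_or_ne j i with rfl | hj
  · simp [symm_apply_at]
  · simp [Function.update, hj, symm_apply_ne i b h hj, symm_apply_ne i b' h hj]

lemma weight_fact (i : Fin N) (b : Bool) (h : {j : Fin N // j ≠ i} → Bool) :
    (∏ j, if (Equiv.funSplitAt i Bool).symm (b, h) j then p else 1 - p)
      = (if b then p else 1 - p)
        * ∏ j : {j : Fin N // j ≠ i}, (if h j then p else 1 - p) := by
  rw [← Finset.mul_prod_erase Finset.univ _ (Finset.mem_univ i)]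
  congr 1
  · rw [symm_apply_at]
  · rw [Finset.prod_subtype (Finset.univ.erase i) (p := fun j => j ≠ i)
      (fun j => by simp)
      (fun x => if (Equiv.funSplitAt i Bool).symm (b, h) x then p else 1 - p)]
    apply Finset.prod_congr rfl
    intro j _
    rw [symm_apply_ne i b h j.2]

lemma key (i : Fin N) (a : Bool) (f : (Fin N → Bool) → ℝ) :
    ∑ z : Fin N → Bool, (∏ j, if z j then p else 1 - p) * (if z i = a then f z else 0)
      = (if a then p else 1 - p)
        * ∑ z : Fin N → Bool, (∏ j, if z j then p else 1 - p)
            * f (Function.update z i a) := by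
  rw [bexp_split i, bexp_split i
    (fun z => (∏ j, if z j then p else 1 - p) * f (Function.update z i a))]
  simp only [Fintype.sum_bool, symm_apply_at, weight_fact, update_symm]
  cases a <;>
  · simp only [if_true, if_false, Bool.true_eq_false, Bool.false_eq_true, mul_zero,
      Finset.sum_const_zero, add_zero, zero_add, reduceIte]
    rw [← Finset.sum_add_distrib, Finset.mul_sum]
    apply Finset.sum_congr rfl
    intro h _
    ring

end aux

/-- Proposition 1 (unbiasedness of the Horvitz–Thompson estimator):
under the Bernoulli design,
`E[(1/(Np)) Σ_i Z_i μ_i(Z) − (1/(N(1−p))) Σ_i (1−Z_i) μ_i(Z)]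
  = (1/N) Σ_i (E[μ_i(Z[i:=1])] − E[μ_i(Z[i:=0])])`. -/
theorem horvitz_thompson_unbiased (N : ℕ) (hN : 1 ≤ N) (p : ℝ) (hp0 : 0 < p) (hp1 : p < 1)
    (μ : Fin N → (Fin N → Bool) → ℝ) :
    bexp p (fun z =>
        (1 / (N * p)) * ∑ i, (if z i then (1 : ℝ) else 0) * μ i z
          - (1 / (N * (1 - p))) * ∑ i, (1 - if z i then (1 : ℝ) else 0) * μ i z)
      = (1 / N) * ∑ i,
          (bexp p (fun z => μ i (Function.update z i true))
            - bexp p (fun z => μ i (Function.update z i false))) := by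
  have hp : (p : ℝ) ≠ 0 := ne_of_gt hp0
  have hq : (1 : ℝ) - p ≠ 0 := by linarith
  have hNne : (N : ℝ) ≠ 0 := Nat.cast_ne_zero.mpr (Nat.one_le_iff_ne_zero.mp hN)
  unfold bexp
  have hind1 : ∀ (z : Fin N → Bool) (i : Fin N),
      (if z i then (1 : ℝ) else 0) * μ i z = (if z i = true then μ i z else 0) := by
    intro z i; cases hz : z i <;> simp
  have hind0 : ∀ (z : Fin N → Bool) (i : Fin N),
      (1 - if z i then (1 : ℝ) else 0) * μ i z = (if z i = false then μ i z else 0) := by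
    intro z i; cases hz : z i <;> simp
  simp only [hind1, hind0]
  have expand : ∑ z : Fin N → Bool, (∏ j, if z j then p else 1 - p) *
        ((1 / (N * p)) * ∑ i, (if z i = true then μ i z else 0)
          - (1 / (N * (1 - p))) * ∑ i, (if z i = false then μ i z else 0))
      = (1 / (N * p)) * ∑ i, ∑ z : Fin N → Bool,
            (∏ j, if z j then p else 1 - p) * (if z i = true then μ i z else 0)
        - (1 / (N * (1 - p))) * ∑ i, ∑ z : Fin N → Bool,
            (∏ j, if z j then p else 1 - p) * (if z i = false then μ i z else 0) := by
    have comm1 : ∑ z : Fin N → Bool, (∏ j, if z j then p else 1 - p)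
          * ∑ i, (if z i = true then μ i z else 0)
        = ∑ i, ∑ z : Fin N → Bool,
            (∏ j, if z j then p else 1 - p) * (if z i = true then μ i z else 0) := by
      simp only [Finset.mul_sum]; exact Finset.sum_comm
    have comm0 : ∑ z : Fin N → Bool, (∏ j, if z j then p else 1 - p)
          * ∑ i, (if z i = false then μ i z else 0)
        = ∑ i, ∑ z : Fin N → Bool,
            (∏ j, if z j then p else 1 - p) * (if z i = false then μ i z else 0) := by
      simp only [Finset.mul_sum]; exact Finset.sum_comm
    rw [← comm1, ← comm0]
    calc ∑ z : Fin N → Bool, (∏ j, if z j then p else 1 - p) *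
          ((1 / (N * p)) * ∑ i, (if z i = true then μ i z else 0)
            - (1 / (N * (1 - p))) * ∑ i, (if z i = false then μ i z else 0))
        = ∑ z : Fin N → Bool,
            ((1 / (N * p)) * ((∏ j, if z j then p else 1 - p)
                * ∑ i, (if z i = true then μ i z else 0))
              - (1 / (N * (1 - p))) * ((∏ j, if z j then p else 1 - p)
                * ∑ i, (if z i = false then μ i z else 0))) :=
          Finset.sum_congr rfl fun z _ => by ring
      _ = _ := by
          rw [Finset.sum_sub_distrib, ← Finset.mul_sum, ← Finset.mul_sum]
  rw [expand]
  have k1 : ∀ i : Fin N, ∑ z : Fin N → Bool,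
        (∏ j, if z j then p else 1 - p) * (if z i = true then μ i z else 0)
      = p * ∑ z : Fin N → Bool,
        (∏ j, if z j then p else 1 - p) * μ i (Function.update z i true) := by
    intro i
    have := key p i true (μ i)
    simpa using this
  have k0 : ∀ i : Fin N, ∑ z : Fin N → Bool,
        (∏ j, if z j then p else 1 - p) * (if z i = false then μ i z else 0)
      = (1 - p) * ∑ z : Fin N → Bool,
        (∏ j, if z j then p else 1 - p) * μ i (Function.update z i false) := by
    intro i
    have := key p i false (μ i)
    simpa using this
  simp only [k1, k0]
  rw [← Finset.mul_sum, ← Finset.mul_sum, Finset.sum_sub_distrib]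
  have h1 : ∀ A : ℝ, 1/((N:ℝ)*p)*(p*A) = 1/N*A := by
    intro A; field_simp
  have h2 : ∀ B : ℝ, 1/((N:ℝ)*(1-p))*((1-p)*B) = 1/N*B := by
    intro B; rw [one_div, mul_inv, mul_assoc, inv_mul_cancel_left₀ hq, one_div]
  rw [h1, h2]
  ring
end

section
/- Cross-covariance identity for non-interfering pairs: Let i ≠ j be indices such that μ_i(z) does not depend on the j-th coordinate of z (μ_i(z[j:=0]) = μ_i(z[j:=1]) for all z) and μ_j(z) does not depend on the i-th coordinate of z. Then Cov[(Z_i/p − (1−Z_i)/(1−p)) μ_i(Z), (Z_j/p − (1−Z_j)/(1−p)) μ_j(Z)] = Σ_{a∈{0,1}} Σ_{b∈{0,1}} (−1)^{a+b} Cov[μ_i^{(a)}(Z), μ_j^{(b)}(Z)]. -/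
/-- Covariance under the Bernoulli(p) product measure. -/
noncomputable def bcov {N : ℕ} (p : ℝ) (f g : (Fin N → Bool) → ℝ) : ℝ :=
  bexp p (fun z => f z * g z) - bexp p f * bexp p g

/-- `(−1)^a` for `a ∈ {0,1}` (with `true ↦ −1`, `false ↦ 1`). -/
def sgn (a : Bool) : ℝ := if a then -1 else 1

open Finset

section aux

variable {N : ℕ}

lemma bexp0_congr {p : ℝ} {f g : (Fin N → Bool) → ℝ} (h : ∀ z, f z = g z) :
    (∑ z : Fin N → Bool, (∏ l, if z l then p else 1 - p) * f z)
      = ∑ z : Fin N → Bool, (∏ l, if z l then p else 1 - p) * g z :=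
  Finset.sum_congr rfl fun z _ => by rw [h z]

lemma indep_update {f : (Fin N → Bool) → ℝ} {i : Fin N}
    (h : ∀ z, f (Function.update z i false) = f (Function.update z i true))
    (z : Fin N → Bool) (a : Bool) : f (Function.update z i a) = f z := by
  cases a
  · cases hz : z i
    · rw [← hz, Function.update_eq_self]
    · rw [h z, ← hz, Function.update_eq_self]
  · cases hz : z i
    · rw [← h z, ← hz, Function.update_eq_self]
    · rw [← hz, Function.update_eq_self]

lemma sum_filter_update {p : ℝ} (k : Fin N) (a b : Bool) (g : (Fin N → Bool) → ℝ) :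
    (∑ z ∈ univ.filter (fun z => z k = b), g (Function.update z k a))
      = ∑ z ∈ univ.filter (fun z => z k = a), g z := by
  refine Finset.sum_nbij' (fun z => Function.update z k a) (fun z => Function.update z k b)
    ?_ ?_ ?_ ?_ ?_
  · intro z _; simp
  · intro z _; simp
  · intro z hz
    simp only [mem_filter, mem_univ, true_and] at hz
    rw [Function.update_idem, ← hz, Function.update_eq_self]
  · intro z hz
    simp only [mem_filter, mem_univ, true_and] at hz
    rw [Function.update_idem, ← hz, Function.update_eq_self]
  · intro z _; rfl

lemma prod_compl_update {p : ℝ} (k : Fin N) (a : Bool) (z : Fin N → Bool) :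
    (∏ l ∈ ({k}ᶜ : Finset (Fin N)), if (Function.update z k a) l then p else 1 - p)
      = ∏ l ∈ ({k}ᶜ : Finset (Fin N)), if z l then p else 1 - p := by
  refine Finset.prod_congr rfl fun l hl => ?_
  rw [Function.update_of_ne (by simpa using hl)]

/-- Marginalization: expectation of `f ∘ update k a` as a sum over the slice `z k = a`. -/
lemma bexp_update {p : ℝ} (k : Fin N) (a : Bool) (f : (Fin N → Bool) → ℝ) :
    (∑ z : Fin N → Bool, (∏ l, if z l then p else 1 - p) * f (Function.update z k a))
      = ∑ z ∈ univ.filter (fun z => z k = a),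
          (∏ l ∈ ({k}ᶜ : Finset (Fin N)), if z l then p else 1 - p) * f z := by
  rw [← Finset.sum_filter_add_sum_filter_not univ (fun z => z k = true)]
  have hsplit : ∀ b : Bool, (∑ z ∈ univ.filter (fun z => z k = b),
      (∏ l, if z l then p else 1 - p) * f (Function.update z k a))
        = (if b then p else 1 - p) * ∑ z ∈ univ.filter (fun z => z k = a),
            (∏ l ∈ ({k}ᶜ : Finset (Fin N)), if z l then p else 1 - p) * f z := by
    intro b
    have step : (∑ z ∈ univ.filter (fun z => z k = b),
        (∏ l, if z l then p else 1 - p) * f (Function.update z k a))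
          = ∑ z ∈ univ.filter (fun z => z k = b), (if b then p else 1 - p) *
              ((fun z => (∏ l ∈ ({k}ᶜ : Finset (Fin N)), if z l then p else 1 - p) * f z)
                (Function.update z k a)) := by
      refine Finset.sum_congr rfl fun z hz => ?_
      simp only [mem_filter, mem_univ, true_and] at hz
      simp only [Fintype.prod_eq_mul_prod_compl k, hz, prod_compl_update (p := p)]
      ring
    rw [step, ← Finset.mul_sum]
    exact congrArg (fun s => (if b = true then p else 1 - p) * s)
      (sum_filter_update (p := p) k a b
        (fun z => (∏ l ∈ ({k}ᶜ : Finset (Fin N)), if z l then p else 1 - p) * f z))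
  have hconv : (univ.filter fun z : Fin N → Bool => ¬ z k = true)
      = univ.filter (fun z => z k = false) := by
    apply Finset.filter_congr; intro z _; simp
  rw [hconv, hsplit true, hsplit false]
  simp only [if_true, Bool.false_eq_true, if_false]
  ring

/-- Horvitz–Thompson pull-out at one coordinate. -/
lemma ht_pull {p : ℝ} (hp0 : 0 < p) (hp1 : p < 1) (k : Fin N) (f : (Fin N → Bool) → ℝ) :
    (∑ z : Fin N → Bool, (∏ l, if z l then p else 1 - p) *
        (((if z k then (1 : ℝ) else 0) / p - (1 - if z k then (1 : ℝ) else 0) / (1 - p)) * f z))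
      = (∑ z : Fin N → Bool, (∏ l, if z l then p else 1 - p) * f (Function.update z k true))
        - ∑ z : Fin N → Bool, (∏ l, if z l then p else 1 - p) * f (Function.update z k false) := by
  have hp : p ≠ 0 := ne_of_gt hp0
  have hq : (1 : ℝ) - p ≠ 0 := by linarith
  rw [bexp_update, bexp_update]
  rw [← Finset.sum_filter_add_sum_filter_not univ (fun z => z k = true)]
  have hconv : (univ.filter fun z : Fin N → Bool => ¬ z k = true)
      = univ.filter (fun z => z k = false) := by
    apply Finset.filter_congr; intro z _; simp
  rw [hconv]
  have h1 : (∑ z ∈ univ.filter (fun z => z k = true),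
      (∏ l, if z l then p else 1 - p) *
        (((if z k then (1 : ℝ) else 0) / p - (1 - if z k then (1 : ℝ) else 0) / (1 - p)) * f z))
      = ∑ z ∈ univ.filter (fun z => z k = true),
          (∏ l ∈ ({k}ᶜ : Finset (Fin N)), if z l then p else 1 - p) * f z := by
    refine Finset.sum_congr rfl fun z hz => ?_
    simp only [mem_filter, mem_univ, true_and] at hz
    rw [Fintype.prod_eq_mul_prod_compl k, hz]
    simp only [if_true]
    field_simp
    ring
  have h2 : (∑ z ∈ univ.filter (fun z => z k = false),
      (∏ l, if z l then p else 1 - p) *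
        (((if z k then (1 : ℝ) else 0) / p - (1 - if z k then (1 : ℝ) else 0) / (1 - p)) * f z))
      = ∑ z ∈ univ.filter (fun z => z k = false),
          - ((∏ l ∈ ({k}ᶜ : Finset (Fin N)), if z l then p else 1 - p) * f z) := by
    refine Finset.sum_congr rfl fun z hz => ?_
    simp only [mem_filter, mem_univ, true_and] at hz
    rw [Fintype.prod_eq_mul_prod_compl k, hz]
    simp only [Bool.false_eq_true, if_false]
    field_simp
    ring
  rw [h1, h2]
  rw [Finset.sum_neg_distrib]
  ring

end aux

lemma bexp_congr {N : ℕ} {p : ℝ} {f g : (Fin N → Bool) → ℝ} (h : ∀ z, f z = g z) :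
    bexp p f = bexp p g := by
  simp only [bexp]; exact bexp0_congr h

lemma ht_pull_bexp {N : ℕ} {p : ℝ} (hp0 : 0 < p) (hp1 : p < 1) (k : Fin N)
    (f : (Fin N → Bool) → ℝ) :
    bexp p (fun z => ((if z k then (1 : ℝ) else 0) / p
        - (1 - if z k then (1 : ℝ) else 0) / (1 - p)) * f z)
      = bexp p (fun z => f (Function.update z k true))
        - bexp p (fun z => f (Function.update z k false)) := by
  simp only [bexp]; exact ht_pull hp0 hp1 k f

/-- Cross-covariance identity for non-interfering pairs: if `μ_i` does not depend on the
`j`-th coordinate and `μ_j` does not depend on the `i`-th coordinate, then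
`Cov[(Z_i/p − (1−Z_i)/(1−p)) μ_i(Z), (Z_j/p − (1−Z_j)/(1−p)) μ_j(Z)]
  = Σ_{a,b∈{0,1}} (−1)^{a+b} Cov[μ_i^{(a)}(Z), μ_j^{(b)}(Z)]`. -/
theorem ht_cross_covariance (N : ℕ) (hN : 1 ≤ N) (p : ℝ) (hp0 : 0 < p) (hp1 : p < 1)
    (μ : Fin N → (Fin N → Bool) → ℝ) (i j : Fin N) (hij : i ≠ j)
    (hi : ∀ z : Fin N → Bool,
      μ i (Function.update z j false) = μ i (Function.update z j true))
    (hj : ∀ z : Fin N → Bool,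
      μ j (Function.update z i false) = μ j (Function.update z i true)) :
    bcov p
        (fun z => ((if z i then (1 : ℝ) else 0) / p
          - (1 - if z i then (1 : ℝ) else 0) / (1 - p)) * μ i z)
        (fun z => ((if z j then (1 : ℝ) else 0) / p
          - (1 - if z j then (1 : ℝ) else 0) / (1 - p)) * μ j z)
      = ∑ a : Bool, ∑ b : Bool, sgn a * sgn b *
          bcov p (fun z => μ i (Function.update z i a))
            (fun z => μ j (Function.update z j b)) := by
  have hU := ht_pull_bexp hp0 hp1 i (μ i)
  have hV := ht_pull_bexp hp0 hp1 j (μ j)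
  have piece : ∀ a : Bool,
      bexp p (fun z => (fun w => μ i w *
          (((if w j then (1 : ℝ) else 0) / p
            - (1 - if w j then (1 : ℝ) else 0) / (1 - p)) * μ j w)) (Function.update z i a))
        = bexp p (fun z => μ i (Function.update z i a) * μ j (Function.update z j true))
          - bexp p (fun z => μ i (Function.update z i a) * μ j (Function.update z j false)) := by
    intro a
    have c1 : bexp p (fun z => (fun w => μ i w *
          (((if w j then (1 : ℝ) else 0) / p
            - (1 - if w j then (1 : ℝ) else 0) / (1 - p)) * μ j w)) (Function.update z i a))
        = bexp p (fun z => ((if z j then (1 : ℝ) else 0) / p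
            - (1 - if z j then (1 : ℝ) else 0) / (1 - p)) *
              ((fun w => μ i (Function.update w i a) * μ j w) z)) := by
      refine bexp_congr fun z => ?_
      simp only
      rw [Function.update_of_ne (Ne.symm hij), indep_update hj]
      ring
    rw [c1, ht_pull_bexp hp0 hp1 j _]
    have c2 : ∀ b : Bool,
        bexp p (fun z => (fun w => μ i (Function.update w i a) * μ j w)
            (Function.update z j b))
          = bexp p (fun z => μ i (Function.update z i a) * μ j (Function.update z j b)) := by
      intro b
      refine bexp_congr fun z => ?_
      simp only
      rw [Function.update_comm (Ne.symm hij), indep_update hi]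
    rw [c2 true, c2 false]
  have key : bexp p (fun z =>
      (((if z i then (1 : ℝ) else 0) / p
          - (1 - if z i then (1 : ℝ) else 0) / (1 - p)) * μ i z) *
      (((if z j then (1 : ℝ) else 0) / p
          - (1 - if z j then (1 : ℝ) else 0) / (1 - p)) * μ j z))
      = (bexp p (fun z => μ i (Function.update z i true) * μ j (Function.update z j true))
          - bexp p (fun z => μ i (Function.update z i true) * μ j (Function.update z j false)))
        - (bexp p (fun z => μ i (Function.update z i false) * μ j (Function.update z j true))
          - bexp p (fun z => μ i (Function.update z i false) * μ j (Function.update z j false))) := by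
    have c0 : bexp p (fun z =>
        (((if z i then (1 : ℝ) else 0) / p
            - (1 - if z i then (1 : ℝ) else 0) / (1 - p)) * μ i z) *
        (((if z j then (1 : ℝ) else 0) / p
            - (1 - if z j then (1 : ℝ) else 0) / (1 - p)) * μ j z))
        = bexp p (fun z => ((if z i then (1 : ℝ) else 0) / p
            - (1 - if z i then (1 : ℝ) else 0) / (1 - p)) *
              ((fun w => μ i w * (((if w j then (1 : ℝ) else 0) / p
                - (1 - if w j then (1 : ℝ) else 0) / (1 - p)) * μ j w)) z)) := by
      refine bexp_congr fun z => ?_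
      simp only
      ring
    rw [c0, ht_pull_bexp hp0 hp1 i _, piece true, piece false]
  simp only [bcov]
  rw [key, hU, hV]
  simp only [Fintype.sum_bool, sgn, if_true, Bool.false_eq_true, if_false]
  ring
end

section
/- Homophily identity and variance domination (Lemma 4): Write μ̄^a = (1/N) Σ_{i=1}^N E[μ_i^{(a)}(Z)] for a ∈ {0,1}, τ_i = E[μ_i^{(1)}(Z)] − E[μ_i^{(0)}(Z)], and τ̄ = (1/N) Σ_{i=1}^N τ_i. Then for any map B assigning to each i a set B(i) ⊆ {1,…,N}, the exact identity (1/N) Σ_{i=1}^N Σ_{j∈B(i)} Σ_{a∈{0,1}} Σ_{b∈{0,1}} (−1)^{a+b} (E[μ_i^{(a)}(Z)] − μ̄^a)(E[μ_j^{(b)}(Z)] − μ̄^b) = (1/N) Σ_{i=1}^N (τ_i − τ̄) Σ_{j∈B(i)} (τ_j − τ̄) holds. Consequently, if the homophily condition (1/N) Σ_{i=1}^N (τ_i − τ̄) Σ_{j∈B(i)} (τ_j − τ̄) ≥ 0 holds, then Σ_{i=1}^N Σ_{j∈B(i)} Σ_{a,b∈{0,1}} (−1)^{a+b} Cov[μ_i^{(a)}(Z),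 μ_j^{(b)}(Z)] ≤ Σ_{i=1}^N Σ_{j∈B(i)} Σ_{a,b∈{0,1}} (−1)^{a+b} E[(μ_i^{(a)}(Z) − μ̄^a)(μ_j^{(b)}(Z) − μ̄^b)]. -/
lemma weight_sum (N : ℕ) (p : ℝ) :
    (∑ z : Fin N → Bool, ∏ i, if z i then p else 1 - p) = 1 := by
  rw [show (Finset.univ : Finset (Fin N → Bool)) = Fintype.piFinset (fun _ => Finset.univ)
      from (Fintype.piFinset_univ).symm,
    ← Finset.prod_univ_sum (t := fun _ => (Finset.univ : Finset Bool))
      (f := fun _ b => if b = true then p else 1 - p)]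
  simp

lemma bexp_expand {N : ℕ} (p c d : ℝ) (f g : (Fin N → Bool) → ℝ) :
    bexp p (fun z => (f z - c) * (g z - d))
      = bexp p (fun z => f z * g z) - c * bexp p g - d * bexp p f + c * d := by
  simp only [bexp]
  have h : ∀ z : Fin N → Bool,
      (∏ i, if z i then p else 1 - p) * ((f z - c) * (g z - d))
        = (∏ i, if z i then p else 1 - p) * (f z * g z)
          - c * ((∏ i, if z i then p else 1 - p) * g z)
          - d * ((∏ i, if z i then p else 1 - p) * f z)
          + c * d * (∏ i, if z i then p else 1 - p) := fun z => by ring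
  rw [Finset.sum_congr rfl (fun z _ => h z)]
  rw [Finset.sum_add_distrib, Finset.sum_sub_distrib, Finset.sum_sub_distrib,
    ← Finset.mul_sum, ← Finset.mul_sum, ← Finset.mul_sum, weight_sum]
  ring

/-- Homophily identity and variance domination (Lemma 4). -/
theorem homophily_identity_and_domination
    (N : ℕ) (hN : 1 ≤ N) (p : ℝ) (hp0 : 0 < p) (hp1 : p < 1)
    (μ : Fin N → (Fin N → Bool) → ℝ) (B : Fin N → Finset (Fin N))
    (mubar : Bool → ℝ)
    (hmubar : ∀ a : Bool,
      mubar a = (1 / N) * ∑ i, bexp p (fun z => μ i (Function.update z i a)))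
    (τ : Fin N → ℝ)
    (hτ : ∀ i, τ i = bexp p (fun z => μ i (Function.update z i true))
        - bexp p (fun z => μ i (Function.update z i false)))
    (τbar : ℝ) (hτbar : τbar = (1 / N) * ∑ i, τ i) :
    ((1 / N) * ∑ i, ∑ j ∈ B i, ∑ a : Bool, ∑ b : Bool, sgn a * sgn b *
          ((bexp p (fun z => μ i (Function.update z i a)) - mubar a)
            * (bexp p (fun z => μ j (Function.update z j b)) - mubar b))
        = (1 / N) * ∑ i, (τ i - τbar) * ∑ j ∈ B i, (τ j - τbar))
    ∧ ((1 / N) * ∑ i, (τ i - τbar) * ∑ j ∈ B i, (τ j - τbar) ≥ 0 →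
        ∑ i, ∑ j ∈ B i, ∑ a : Bool, ∑ b : Bool, sgn a * sgn b *
            bcov p (fun z => μ i (Function.update z i a))
              (fun z => μ j (Function.update z j b))
          ≤ ∑ i, ∑ j ∈ B i, ∑ a : Bool, ∑ b : Bool, sgn a * sgn b *
              bexp p (fun z =>
                (μ i (Function.update z i a) - mubar a)
                  * (μ j (Function.update z j b) - mubar b))) := by
  -- mubar true - mubar false = τbar
  have h1 : mubar true - mubar false = τbar := by
    rw [hmubar true, hmubar false, hτbar, ← mul_sub, ← Finset.sum_sub_distrib]
    congr 1
    exact Finset.sum_congr rfl fun i _ => (hτ i).symm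
  -- key pointwise identity
  have key : ∀ i j : Fin N,
      (∑ a : Bool, ∑ b : Bool, sgn a * sgn b *
          ((bexp p (fun z => μ i (Function.update z i a)) - mubar a)
            * (bexp p (fun z => μ j (Function.update z j b)) - mubar b)))
        = (τ i - τbar) * (τ j - τbar) := by
    intro i j
    simp only [Fintype.sum_bool, sgn, Bool.false_eq_true, if_true, if_false]
    rw [hτ i, hτ j, ← h1]
    ring
  have part1 : (1 / (N:ℝ)) * ∑ i, ∑ j ∈ B i, ∑ a : Bool, ∑ b : Bool, sgn a * sgn b *
          ((bexp p (fun z => μ i (Function.update z i a)) - mubar a)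
            * (bexp p (fun z => μ j (Function.update z j b)) - mubar b))
        = (1 / N) * ∑ i, (τ i - τbar) * ∑ j ∈ B i, (τ j - τbar) := by
    congr 1
    refine Finset.sum_congr rfl fun i _ => ?_
    rw [Finset.mul_sum]
    exact Finset.sum_congr rfl fun j _ => key i j
  refine ⟨part1, fun hpos => ?_⟩
  have hN0 : (0:ℝ) < (N:ℝ) := by exact_mod_cast Nat.lt_of_lt_of_le Nat.zero_lt_one hN
  -- the difference equals the nonnegative quantity
  have hdiff : (∑ i, ∑ j ∈ B i, ∑ a : Bool, ∑ b : Bool, sgn a * sgn b *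
              bexp p (fun z =>
                (μ i (Function.update z i a) - mubar a)
                  * (μ j (Function.update z j b) - mubar b)))
        - (∑ i, ∑ j ∈ B i, ∑ a : Bool, ∑ b : Bool, sgn a * sgn b *
            bcov p (fun z => μ i (Function.update z i a))
              (fun z => μ j (Function.update z j b)))
        = ∑ i, (τ i - τbar) * ∑ j ∈ B i, (τ j - τbar) := by
    rw [← Finset.sum_sub_distrib]
    refine Finset.sum_congr rfl fun i _ => ?_
    rw [← Finset.sum_sub_distrib, Finset.mul_sum]
    refine Finset.sum_congr rfl fun j _ => ?_
    rw [← key i j, ← Finset.sum_sub_distrib]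
    refine Finset.sum_congr rfl fun a _ => ?_
    rw [← Finset.sum_sub_distrib]
    refine Finset.sum_congr rfl fun b _ => ?_
    rw [bexp_expand p (mubar a) (mubar b)
      (fun z => μ i (Function.update z i a)) (fun z => μ j (Function.update z j b))]
    simp only [bcov]
    ring
  have hS : (0:ℝ) ≤ ∑ i, (τ i - τbar) * ∑ j ∈ B i, (τ j - τbar) := by
    have := mul_le_mul_of_nonneg_left hpos (le_of_lt hN0)
    calc (0:ℝ) = (N:ℝ) * 0 := by ring
      _ ≤ (N:ℝ) * ((1 / N) * ∑ i, (τ i - τbar) * ∑ j ∈ B i, (τ j - τbar)) := by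
          exact mul_le_mul_of_nonneg_left hpos (le_of_lt hN0)
      _ = ∑ i, (τ i - τbar) * ∑ j ∈ B i, (τ j - τbar) := by
          field_simp
  linarith [hdiff, hS]
end

section
/- Approximation bound C4.3 (variance of the average of marginalized circle means): Given a dependency structure B, suppose |μ_i(z)| ≤ b for all i and z, and |B(i)| ≤ c̃ for all i. Then for each a ∈ {0,1}: 0 ≤ E[((1/N) Σ_{k=1}^N μ_k^{(a)}(Z))²] − ((1/N) Σ_{k=1}^N E[μ_k^{(a)}(Z)])² ≤ c̃ b² / N. -/
/-- A dependency structure. -/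
def DepStruct {N : ℕ} (p : ℝ) (μ : Fin N → (Fin N → Bool) → ℝ)
    (B : Fin N → Finset (Fin N)) : Prop :=
  (∀ i, i ∈ B i) ∧
  ∀ i j : Fin N, j ∉ B i →
    (∀ z : Fin N → Bool, μ i (Function.update z j false) = μ i (Function.update z j true)) ∧
    (∀ z : Fin N → Bool, μ j (Function.update z i false) = μ j (Function.update z i true)) ∧
    (∀ a b : Bool, bcov p (fun z => μ i (Function.update z i a))
        (fun z => μ j (Function.update z j b)) = 0)

section Aux
variable {N : ℕ} {p : ℝ}

lemma bw_sum : ∑ z : Fin N → Bool, (∏ i, if z i then p else 1 - p) = 1 := by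
  rw [← Fintype.piFinset_univ, ← Finset.prod_univ_sum
    (fun _ : Fin N => (Finset.univ : Finset Bool)) (fun _ b => if b then p else 1 - p)]
  simp

lemma bw_nonneg (hp0 : 0 < p) (hp1 : p < 1) (z : Fin N → Bool) :
    0 ≤ ∏ i, if z i then p else 1 - p :=
  Finset.prod_nonneg fun i _ => by split <;> linarith

lemma bexp_add (f g : (Fin N → Bool) → ℝ) :
    bexp p (fun z => f z + g z) = bexp p f + bexp p g := by
  simp [bexp, mul_add, Finset.sum_add_distrib]

lemma bexp_sub (f g : (Fin N → Bool) → ℝ) :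
    bexp p (fun z => f z - g z) = bexp p f - bexp p g := by
  simp [bexp, mul_sub, Finset.sum_sub_distrib]

lemma bexp_const_mul (c : ℝ) (f : (Fin N → Bool) → ℝ) :
    bexp p (fun z => c * f z) = c * bexp p f := by
  simp [bexp, Finset.mul_sum, mul_left_comm]

lemma bexp_const (c : ℝ) : bexp (N := N) p (fun _ => c) = c := by
  simp [bexp, ← Finset.sum_mul, bw_sum]

lemma bexp_sum {ι : Type*} (s : Finset ι) (f : ι → (Fin N → Bool) → ℝ) :
    bexp p (fun z => ∑ k ∈ s, f k z) = ∑ k ∈ s, bexp p (f k) := by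
  simp [bexp, Finset.mul_sum]
  rw [Finset.sum_comm]

lemma bexp_mono (hp0 : 0 < p) (hp1 : p < 1) {f g : (Fin N → Bool) → ℝ}
    (h : ∀ z, f z ≤ g z) : bexp p f ≤ bexp p g :=
  Finset.sum_le_sum fun z _ => mul_le_mul_of_nonneg_left (h z) (bw_nonneg hp0 hp1 z)

noncomputable def bvar {N : ℕ} (p : ℝ) (f : (Fin N → Bool) → ℝ) : ℝ :=
  bexp p (fun z => f z ^ 2) - (bexp p f) ^ 2

lemma bvar_eq (f : (Fin N → Bool) → ℝ) :
    bvar p f = bexp p (fun z => (f z - bexp p f) ^ 2) := by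
  have h : ∀ z, (f z - bexp p f) ^ 2
      = f z ^ 2 - (2 * bexp p f) * f z + (bexp p f) ^ 2 := fun z => by ring
  simp only [h]
  rw [show (fun z => f z ^ 2 - (2 * bexp p f) * f z + (bexp p f) ^ 2)
      = (fun z => ((fun z => f z ^ 2) z - (fun z => (2 * bexp p f) * f z) z)
        + (fun _ => (bexp p f) ^ 2) z) from rfl,
    bexp_add, bexp_sub, bexp_const_mul, bexp_const, bvar]
  ring

lemma bvar_nonneg (hp0 : 0 < p) (hp1 : p < 1) (f : (Fin N → Bool) → ℝ) :
    0 ≤ bvar p f := by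
  rw [bvar_eq]
  have := bexp_mono (p := p) hp0 hp1 (f := fun _ => (0:ℝ))
    (g := fun z => (f z - bexp p f) ^ 2) (fun z => sq_nonneg _)
  simpa [bexp_const] using this

lemma bvar_le (hp0 : 0 < p) (hp1 : p < 1) {f : (Fin N → Bool) → ℝ} {b : ℝ}
    (hf : ∀ z, |f z| ≤ b) : bvar p f ≤ b ^ 2 := by
  have h1 : bexp p (fun z => f z ^ 2) ≤ b ^ 2 := by
    have := bexp_mono (p := p) hp0 hp1 (f := fun z => f z ^ 2) (g := fun _ => b ^ 2)
      (fun z => by show f z ^ 2 ≤ b ^ 2; have := hf z; nlinarith [sq_abs (f z), abs_nonneg (f z)])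
    simpa [bexp_const] using this
  have h2 : 0 ≤ (bexp p f) ^ 2 := sq_nonneg _
  simp only [bvar]; linarith

lemma bvar_sub_eq (f g : (Fin N → Bool) → ℝ) :
    bvar p (fun z => f z - g z) = bvar p f + bvar p g - 2 * bcov p f g := by
  have e1 : bexp p (fun z => (f z - g z) ^ 2)
      = bexp p (fun z => f z ^ 2) - 2 * bexp p (fun z => f z * g z)
        + bexp p (fun z => g z ^ 2) := by
    rw [show (fun z => (f z - g z) ^ 2)
        = fun z => ((fun z => f z ^ 2) z - (fun z => 2 * ((fun z => f z * g z) z)) z)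
          + (fun z => g z ^ 2) z from funext fun z => by ring,
      bexp_add, bexp_sub, bexp_const_mul]
  have e2 : bexp p (fun z => f z - g z) = bexp p f - bexp p g := bexp_sub f g
  simp only [bvar, bcov, e1, e2]
  ring

lemma bcov_le (hp0 : 0 < p) (hp1 : p < 1) {f g : (Fin N → Bool) → ℝ} {b : ℝ}
    (hf : ∀ z, |f z| ≤ b) (hg : ∀ z, |g z| ≤ b) : bcov p f g ≤ b ^ 2 := by
  have h0 := bvar_nonneg hp0 hp1 (fun z => f z - g z)
  rw [bvar_sub_eq] at h0
  have h1 := bvar_le hp0 hp1 hf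
  have h2 := bvar_le hp0 hp1 hg
  linarith

lemma bvar_sum (f : Fin N → (Fin N → Bool) → ℝ) :
    bvar p (fun z => ∑ k, f k z) = ∑ i, ∑ j, bcov p (f i) (f j) := by
  have e1 : bexp p (fun z => (∑ k, f k z) ^ 2)
      = ∑ i, ∑ j, bexp p (fun z => f i z * f j z) := by
    rw [show (fun z => (∑ k, f k z) ^ 2)
        = fun z => ∑ i, (fun i z => ∑ j, f i z * f j z) i z from
        funext fun z => by rw [sq, Finset.sum_mul_sum], bexp_sum]
    exact Finset.sum_congr rfl fun i _ => bexp_sum _ _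
  have e2 : bexp p (fun z => ∑ k, f k z) = ∑ k, bexp p (f k) := bexp_sum _ _
  rw [bvar, e1, e2, sq, Finset.sum_mul_sum]
  simp only [bcov]
  rw [← Finset.sum_sub_distrib]
  exact Finset.sum_congr rfl fun i _ => by rw [← Finset.sum_sub_distrib]

end Aux

/-- Approximation bound C4.3 (variance of the average of marginalized circle means):
given a dependency structure with `|μ_i| ≤ b` and `|B(i)| ≤ c̃`, for each `a ∈ {0,1}`:
`0 ≤ E[((1/N) Σ_k μ_k^{(a)}(Z))²] − ((1/N) Σ_k E[μ_k^{(a)}(Z)])² ≤ c̃ b²/N`. -/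
theorem approx_bound_C43
    (N : ℕ) (hN : 1 ≤ N) (p : ℝ) (hp0 : 0 < p) (hp1 : p < 1)
    (μ : Fin N → (Fin N → Bool) → ℝ) (B : Fin N → Finset (Fin N))
    (hB : DepStruct p μ B)
    (b : ℝ) (hb : ∀ i z, |μ i z| ≤ b)
    (ctil : ℕ) (hc : ∀ i, (B i).card ≤ ctil)
    (a : Bool) :
    0 ≤ bexp p (fun z => ((1 / (N : ℝ)) * ∑ k, μ k (Function.update z k a)) ^ 2)
        - ((1 / (N : ℝ)) * ∑ k, bexp p (fun z => μ k (Function.update z k a))) ^ 2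
    ∧ bexp p (fun z => ((1 / (N : ℝ)) * ∑ k, μ k (Function.update z k a)) ^ 2)
        - ((1 / (N : ℝ)) * ∑ k, bexp p (fun z => μ k (Function.update z k a))) ^ 2
      ≤ ctil * b ^ 2 / N := by
  obtain ⟨hBmem, hBcov⟩ := hB
  set F : Fin N → (Fin N → Bool) → ℝ := fun k z => μ k (Function.update z k a) with hF
  have hNpos : (0:ℝ) < N := by exact_mod_cast Nat.lt_of_lt_of_le Nat.zero_lt_one hN
  have key : bexp p (fun z => ((1 / (N : ℝ)) * ∑ k, F k z) ^ 2)
      - ((1 / (N : ℝ)) * ∑ k, bexp p (F k)) ^ 2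
      = (1 / (N:ℝ))^2 * bvar p (fun z => ∑ k, F k z) := by
    have e : bexp p (fun z => ((1 / (N : ℝ)) * ∑ k, F k z) ^ 2)
        = (1/(N:ℝ))^2 * bexp p (fun z => (∑ k, F k z)^2) := by
      rw [show (fun z => ((1 / (N : ℝ)) * ∑ k, F k z) ^ 2)
          = fun z => (1/(N:ℝ))^2 * ((fun z => (∑ k, F k z)^2) z) from funext fun z => by ring,
        bexp_const_mul]
    rw [e, ← bexp_sum, bvar]; ring
  constructor
  · rw [key]
    exact mul_nonneg (sq_nonneg _) (bvar_nonneg hp0 hp1 _)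
  · rw [key, bvar_sum]
    have hFb : ∀ k z, |F k z| ≤ b := fun k z => hb _ _
    have hrow : ∀ i, (∑ j, bcov p (F i) (F j)) ≤ ctil * b^2 := by
      intro i
      have hz : ∑ j, bcov p (F i) (F j) = ∑ j ∈ B i, bcov p (F i) (F j) := by
        refine (Finset.sum_subset (Finset.subset_univ _) ?_).symm
        intro j _ hj
        exact (hBcov i j hj).2.2 a a
      rw [hz]
      calc ∑ j ∈ B i, bcov p (F i) (F j) ≤ ∑ _j ∈ B i, b^2 :=
            Finset.sum_le_sum fun j _ => bcov_le hp0 hp1 (hFb i) (hFb j)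
        _ = (B i).card * b^2 := by rw [Finset.sum_const, nsmul_eq_mul]
        _ ≤ ctil * b^2 := by
            exact mul_le_mul_of_nonneg_right (by exact_mod_cast hc i) (sq_nonneg b)
    calc (1/(N:ℝ))^2 * ∑ i, ∑ j, bcov p (F i) (F j)
        ≤ (1/(N:ℝ))^2 * ∑ _i : Fin N, ((ctil : ℝ) * b^2) :=
          mul_le_mul_of_nonneg_left (Finset.sum_le_sum fun i _ => hrow i) (sq_nonneg _)
      _ = (ctil : ℝ) * b^2 / N := by
          rw [Finset.sum_const, Finset.card_univ, Fintype.card_fin, nsmul_eq_mul]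
          field_simp
end

section
/- Approximation bound C4.2: Given a dependency structure B, suppose |μ_i(z)| ≤ b for all i and z, and |B(i)| ≤ c̃ for all i. Suppose additionally that for all i, all j ∈ B(i) with j ≠ i, all a, b' ∈ {0,1}, and all k ∉ B(i) ∪ B(j), the function z ↦ μ_i(z[i:=a][j:=b']) does not depend on the k-th coordinate of z, and E[μ_i(Z[i:=a][j:=b']) μ_k^{(c)}(Z)] = E[μ_i(Z[i:=a][j:=b'])] E[μ_k^{(c)}(Z)] for all c ∈ {0,1}. Then | (1/N²) Σ_{i=1}^N Σ_{j∈B(i), j≠i} Σ_{k=1}^N ( E[μ_i(Z[i:=a][j:=b']) μ_k^{(c)}(Z)] − E[μ_i(Z[i:=a][j:=b'])] E[μ_k^{(c)}(Z)] ) | ≤ 4 c̃² b² / N for all a, b', c ∈ {0,1}. -/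
lemma bsum_one (N : ℕ) (p : ℝ) :
    ∑ z : Fin N → Bool, ∏ i, (if z i then p else 1 - p) = 1 := by
  have := Finset.prod_univ_sum (κ := fun _ : Fin N => Bool) (t := fun _ => Finset.univ)
    (f := fun _ b => if b then p else 1 - p)
  simp only [Fintype.piFinset_univ] at this
  rw [← this]; simp

lemma bexp_abs_le {N : ℕ} {p : ℝ} (hp0 : 0 ≤ p) (hp1 : p ≤ 1)
    {f : (Fin N → Bool) → ℝ} {M : ℝ} (hf : ∀ z, |f z| ≤ M) : |bexp p f| ≤ M := by
  have hw : ∀ z : Fin N → Bool, 0 ≤ ∏ i, (if z i then p else 1 - p) := fun z =>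
    Finset.prod_nonneg fun i _ => by split <;> linarith
  calc |bexp p f| ≤ ∑ z : Fin N → Bool, |(∏ i, if z i then p else 1 - p) * f z| :=
        Finset.abs_sum_le_sum_abs _ _
    _ ≤ ∑ z : Fin N → Bool, (∏ i, if z i then p else 1 - p) * M := by
        apply Finset.sum_le_sum; intro z _
        rw [abs_mul, abs_of_nonneg (hw z)]
        exact mul_le_mul_of_nonneg_left (hf z) (hw z)
    _ = M := by rw [← Finset.sum_mul, bsum_one, one_mul]

lemma cov_abs_le {N : ℕ} {p : ℝ} (hp0 : 0 ≤ p) (hp1 : p ≤ 1)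
    {f g : (Fin N → Bool) → ℝ} {M : ℝ} (hM : 0 ≤ M)
    (hf : ∀ z, |f z| ≤ M) (hg : ∀ z, |g z| ≤ M) :
    |bexp p (fun z => f z * g z) - bexp p f * bexp p g| ≤ 2 * M ^ 2 := by
  have h1 : |bexp p (fun z => f z * g z)| ≤ M ^ 2 := by
    apply bexp_abs_le hp0 hp1
    intro z; rw [abs_mul, sq]
    exact mul_le_mul (hf z) (hg z) (abs_nonneg _) hM
  have h2 : |bexp p f * bexp p g| ≤ M ^ 2 := by
    rw [abs_mul, sq]
    exact mul_le_mul (bexp_abs_le hp0 hp1 hf) (bexp_abs_le hp0 hp1 hg) (abs_nonneg _) hM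
  calc |bexp p (fun z => f z * g z) - bexp p f * bexp p g|
      ≤ |bexp p (fun z => f z * g z)| + |bexp p f * bexp p g| := abs_sub _ _
    _ ≤ 2 * M ^ 2 := by linarith

/-- Approximation bound C4.2: given a dependency structure with `|μ_i| ≤ b` and
`|B(i)| ≤ c̃`, and assuming additionally that for all `i`, `j ∈ B(i)` with `j ≠ i`,
`a, b' ∈ {0,1}` and `k ∉ B(i) ∪ B(j)` the function `z ↦ μ_i(z[i:=a][j:=b'])` does not
depend on the `k`-th coordinate and `E[μ_i(Z[i:=a][j:=b']) μ_k^{(c)}(Z)]` factorizes,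
then `|(1/N²) Σ_i Σ_{j∈B(i),j≠i} Σ_k (E[μ_i(Z[i:=a][j:=b']) μ_k^{(c)}(Z)]
  − E[μ_i(Z[i:=a][j:=b'])] E[μ_k^{(c)}(Z)])| ≤ 4 c̃² b²/N` for all `a, b', c ∈ {0,1}`. -/
theorem approx_bound_C42
    (N : ℕ) (hN : 1 ≤ N) (p : ℝ) (hp0 : 0 < p) (hp1 : p < 1)
    (μ : Fin N → (Fin N → Bool) → ℝ) (B : Fin N → Finset (Fin N))
    (hB : DepStruct p μ B)
    (b : ℝ) (hb : ∀ i z, |μ i z| ≤ b)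
    (ctil : ℕ) (hc : ∀ i, (B i).card ≤ ctil)
    (hextra : ∀ i : Fin N, ∀ j ∈ B i, j ≠ i → ∀ a b' : Bool, ∀ k : Fin N,
      k ∉ B i ∪ B j →
        (∀ (z : Fin N → Bool) (v : Bool),
          μ i (Function.update (Function.update (Function.update z k v) i a) j b')
            = μ i (Function.update (Function.update z i a) j b')) ∧
        (∀ c : Bool,
          bexp p (fun z =>
              μ i (Function.update (Function.update z i a) j b')
                * μ k (Function.update z k c))
            = bexp p (fun z => μ i (Function.update (Function.update z i a) j b'))
              * bexp p (fun z => μ k (Function.update z k c)))) :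
    ∀ a b' c : Bool,
      |(1 / (N : ℝ) ^ 2) * ∑ i, ∑ j ∈ (B i).erase i, ∑ k,
          (bexp p (fun z =>
              μ i (Function.update (Function.update z i a) j b')
                * μ k (Function.update z k c))
            - bexp p (fun z => μ i (Function.update (Function.update z i a) j b'))
                * bexp p (fun z => μ k (Function.update z k c)))|
        ≤ 4 * ctil ^ 2 * b ^ 2 / N := by
  intro a b' c
  have hbpos : 0 ≤ b := le_trans (abs_nonneg _) (hb ⟨0, hN⟩ (fun _ => false))
  set T : Fin N → Fin N → Fin N → ℝ := fun i j k =>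
    bexp p (fun z =>
        μ i (Function.update (Function.update z i a) j b')
          * μ k (Function.update z k c))
      - bexp p (fun z => μ i (Function.update (Function.update z i a) j b'))
          * bexp p (fun z => μ k (Function.update z k c)) with hT
  -- inner sum bound
  have hinner : ∀ i : Fin N, ∀ j ∈ (B i).erase i,
      |∑ k, T i j k| ≤ 2 * ctil * (2 * b ^ 2) := by
    intro i j hj
    obtain ⟨hji, hjB⟩ := Finset.mem_erase.mp hj
    have hzero : ∀ k ∉ B i ∪ B j, T i j k = 0 := by
      intro k hk
      have := (hextra i j hjB hji a b' k hk).2 c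
      simp only [hT]
      rw [this]; ring
    have hsum : ∑ k, T i j k = ∑ k ∈ B i ∪ B j, T i j k := by
      symm
      apply Finset.sum_subset (Finset.subset_univ _)
      intro k _ hk; exact hzero k hk
    rw [hsum]
    have hcardu : ((B i ∪ B j).card : ℝ) ≤ 2 * ctil := by
      have := Finset.card_union_le (B i) (B j)
      have := hc i; have := hc j
      push_cast
      have h1 : (B i ∪ B j).card ≤ 2 * ctil := by omega
      exact_mod_cast h1
    have hterm : ∀ k ∈ B i ∪ B j, |T i j k| ≤ 2 * b ^ 2 := by
      intro k _
      exact cov_abs_le hp0.le hp1.le hbpos (fun z => hb _ _) (fun z => hb _ _)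
    calc |∑ k ∈ B i ∪ B j, T i j k| ≤ ∑ k ∈ B i ∪ B j, |T i j k| :=
          Finset.abs_sum_le_sum_abs _ _
      _ ≤ ∑ _k ∈ B i ∪ B j, 2 * b ^ 2 := Finset.sum_le_sum hterm
      _ = ((B i ∪ B j).card : ℝ) * (2 * b ^ 2) := by
          rw [Finset.sum_const, nsmul_eq_mul]
      _ ≤ 2 * ctil * (2 * b ^ 2) := by
          apply mul_le_mul_of_nonneg_right hcardu; positivity
  have hmid : ∀ i : Fin N,
      |∑ j ∈ (B i).erase i, ∑ k, T i j k| ≤ ctil * (2 * ctil * (2 * b ^ 2)) := by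
    intro i
    have hcardE : (((B i).erase i).card : ℝ) ≤ ctil := by
      have h1 : ((B i).erase i).card ≤ ctil :=
        le_trans (Finset.card_erase_le) (hc i)
      exact_mod_cast h1
    calc |∑ j ∈ (B i).erase i, ∑ k, T i j k|
        ≤ ∑ j ∈ (B i).erase i, |∑ k, T i j k| := Finset.abs_sum_le_sum_abs _ _
      _ ≤ ∑ _j ∈ (B i).erase i, 2 * ctil * (2 * b ^ 2) :=
          Finset.sum_le_sum (fun j hj => hinner i j hj)
      _ = (((B i).erase i).card : ℝ) * (2 * ctil * (2 * b ^ 2)) := by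
          rw [Finset.sum_const, nsmul_eq_mul]
      _ ≤ ctil * (2 * ctil * (2 * b ^ 2)) := by
          apply mul_le_mul_of_nonneg_right hcardE; positivity
  have houter :
      |∑ i, ∑ j ∈ (B i).erase i, ∑ k, T i j k|
        ≤ N * (ctil * (2 * ctil * (2 * b ^ 2))) := by
    calc |∑ i, ∑ j ∈ (B i).erase i, ∑ k, T i j k|
        ≤ ∑ i : Fin N, |∑ j ∈ (B i).erase i, ∑ k, T i j k| :=
          Finset.abs_sum_le_sum_abs _ _
      _ ≤ ∑ _i : Fin N, ctil * (2 * ctil * (2 * b ^ 2)) :=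
          Finset.sum_le_sum (fun i _ => hmid i)
      _ = N * (ctil * (2 * ctil * (2 * b ^ 2))) := by
          rw [Finset.sum_const, nsmul_eq_mul, Finset.card_univ, Fintype.card_fin]
  have hNpos : (0 : ℝ) < N := by exact_mod_cast hN
  rw [abs_mul]
  have h1 : |(1 : ℝ) / (N : ℝ) ^ 2| = 1 / (N : ℝ) ^ 2 := by
    rw [abs_of_pos]; positivity
  rw [h1]
  calc (1 / (N : ℝ) ^ 2) * |∑ i, ∑ j ∈ (B i).erase i, ∑ k, T i j k|
      ≤ (1 / (N : ℝ) ^ 2) * (N * (ctil * (2 * ctil * (2 * b ^ 2)))) := by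
        apply mul_le_mul_of_nonneg_left houter; positivity
    _ = 4 * ctil ^ 2 * b ^ 2 / N := by
        field_simp; ring
end
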